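/- Let T be a set, I a countable index set, (a_j)_{j∈I} real numbers with ∑_{j∈I}|a_j| < ∞, and for each n ≥ 1 and j ∈ I let U_j^{(n)} = (U_j^{(n)}(t))_{t∈T} be a stochastic process on a common probability space such that the suprema ‖U_j^{(n)}‖_T and ‖U_i^{(n)} − U_j^{(n)}‖_T are measurable (e.g. T is countable). Suppose (a) sup_n sup_{j∈I} E(‖U_j^{(n)}‖_T) < ∞, and (b) for each pair i, j ∈ I, ‖U_i^{(n)} − U_j^{(n)}‖_T → 0 in probability as n → ∞. Define ψ^{(n)}(t) = ∑_{j∈I} a_j U_j^{(n)}(t) (the series converging absolutely a.s. for each t) and A = ∑_{j∈I} a_j. Then for any fixed e ∈ I, ‖ψ^{(n)} − A·U_e^{(n)}‖_T → 0 in probability as n → ∞. -/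

import Mathlib

open MeasureTheory Filter Topology ENNReal

/-- **Lemma 1 (convergence in probability part)** of Peligrad–Utev,
"Invariance principle for stochastic processes with short memory".
If `ψ⁽ⁿ⁾ = ∑_{j∈I} a_j U_j⁽ⁿ⁾` with `∑ |a_j| < ∞`, the suprema of the processes have
uniformly bounded expectations, and `‖U_i⁽ⁿ⁾ − U_j⁽ⁿ⁾‖_T → 0` in probability for each pair,
then `‖ψ⁽ⁿ⁾ − A U_e⁽ⁿ⁾‖_T → 0` in probability, where `A = ∑ a_j`. -/
theorem stmt0
    {Ω : Type*} [MeasurableSpace Ω] (μ : Measure Ω) [IsProbabilityMeasure μ]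
    {T : Type*} [Countable T] {I : Type*} [Countable I]
    (a : I → ℝ) (ha : Summable fun j => |a j|)
    (U : ℕ → I → Ω → T → ℝ)
    (hUmeas : ∀ n j t, Measurable fun ω => U n j ω t)
    (hbound : ∃ C : ℝ≥0∞, C < ⊤ ∧ ∀ n j,
      (∫⁻ ω, (⨆ t, (‖U n j ω t‖₊ : ℝ≥0∞)) ∂μ) ≤ C)
    (hdiff : ∀ i j : I, ∀ ε : ℝ≥0∞, 0 < ε →
      Tendsto (fun n => μ {ω : Ω | ε < ⨆ t, (‖U n i ω t - U n j ω t‖₊ : ℝ≥0∞)})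
        atTop (𝓝 0))
    (ψ : ℕ → Ω → T → ℝ)
    (hψ : ∀ n, ∀ᵐ ω ∂μ, ∀ t, HasSum (fun j => a j * U n j ω t) (ψ n ω t))
    (A : ℝ) (hA : HasSum a A) (e : I) :
    ∀ ε : ℝ≥0∞, 0 < ε →
      Tendsto (fun n => μ {ω : Ω | ε < ⨆ t, (‖ψ n ω t - A * U n e ω t‖₊ : ℝ≥0∞)})
        atTop (𝓝 0) := by
  classical
  obtain ⟨C, hCtop, hC⟩ := hbound
  set c : I → NNReal := fun j => ‖a j‖₊ with hc_def
  have hc : Summable c := by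
    rw [← NNReal.summable_coe]
    simpa [c, Real.norm_eq_abs] using ha
  set V : ℕ → I → Ω → ℝ≥0∞ := fun n j ω => ⨆ t, (‖U n j ω t - U n e ω t‖₊ : ℝ≥0∞)
    with hV_def
  have hVmeas : ∀ n j, Measurable (V n j) := fun n j =>
    Measurable.iSup fun t => ((hUmeas n j t).sub (hUmeas n e t)).nnnorm.coe_nnreal_ennreal
  -- expectation bound
  have hVint : ∀ n j, ∫⁻ ω, V n j ω ∂μ ≤ 2 * (C + 1) := by
    intro n j
    have hle : ∀ ω, V n j ω
        ≤ (⨆ t, (‖U n j ω t‖₊ : ℝ≥0∞)) + (⨆ t, (‖U n e ω t‖₊ : ℝ≥0∞)) := by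
      intro ω
      refine iSup_le fun t => ?_
      calc (‖U n j ω t - U n e ω t‖₊ : ℝ≥0∞)
          ≤ (‖U n j ω t‖₊ : ℝ≥0∞) + (‖U n e ω t‖₊ : ℝ≥0∞) := by
            exact_mod_cast nnnorm_sub_le _ _
        _ ≤ _ := add_le_add (le_iSup (fun t => ((‖U n j ω t‖₊ : ℝ≥0∞))) t)
            (le_iSup (fun t => ((‖U n e ω t‖₊ : ℝ≥0∞))) t)
    calc ∫⁻ ω, V n j ω ∂μ
        ≤ ∫⁻ ω, (⨆ t, (‖U n j ω t‖₊ : ℝ≥0∞)) + (⨆ t, (‖U n e ω t‖₊ : ℝ≥0∞)) ∂μ :=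
          lintegral_mono hle
      _ = (∫⁻ ω, ⨆ t, (‖U n j ω t‖₊ : ℝ≥0∞) ∂μ) + ∫⁻ ω, ⨆ t, (‖U n e ω t‖₊ : ℝ≥0∞) ∂μ :=
          lintegral_add_left (Measurable.iSup fun t => (hUmeas n j t).nnnorm.coe_nnreal_ennreal) _
      _ ≤ C + C := add_le_add (hC n j) (hC n e)
      _ ≤ 2 * (C + 1) := by
          rw [two_mul]
          exact add_le_add (le_add_right le_rfl) (le_add_right le_rfl)
  -- a.e. domination
  have hae : ∀ n, ∀ᵐ ω ∂μ,
      (⨆ t, (‖ψ n ω t - A * U n e ω t‖₊ : ℝ≥0∞)) ≤ ∑' j, (c j : ℝ≥0∞) * V n j ω := by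
    intro n
    filter_upwards [hψ n] with ω hω
    refine iSup_le fun t => ?_
    have h1 : HasSum (fun j => a j * U n j ω t - a j * U n e ω t)
        (ψ n ω t - A * U n e ω t) := (hω t).sub (hA.mul_right _)
    have h2 : (‖ψ n ω t - A * U n e ω t‖₊ : ℝ≥0∞)
        ≤ ∑' j, (‖a j * U n j ω t - a j * U n e ω t‖₊ : ℝ≥0∞) := by
      by_cases htop : (∑' j, (‖a j * U n j ω t - a j * U n e ω t‖₊ : ℝ≥0∞)) = ⊤
      · exact htop ▸ le_top
      · have hs : Summable fun j => ‖a j * U n j ω t - a j * U n e ω t‖₊ :=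
          ENNReal.tsum_coe_ne_top_iff_summable.1 htop
        rw [← h1.tsum_eq, ← ENNReal.coe_tsum hs]
        exact_mod_cast nnnorm_tsum_le hs
    refine h2.trans (ENNReal.tsum_le_tsum fun j => ?_)
    rw [← mul_sub, nnnorm_mul]
    push_cast
    exact mul_le_mul_right (le_iSup (fun t => ((‖U n j ω t - U n e ω t‖₊ : ℝ≥0∞))) t) _
  -- convergence of finite sums
  have hfin : ∀ (s : Finset I) (ε' : ℝ≥0∞), 0 < ε' →
      Tendsto (fun n => μ {ω | ε' < ∑ j ∈ s, (c j : ℝ≥0∞) * V n j ω}) atTop (𝓝 0) := by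
    intro s
    induction s using Finset.induction_on with
    | empty =>
        intro ε' hε'
        have : ∀ n, {ω | ε' < ∑ j ∈ (∅ : Finset I), (c j : ℝ≥0∞) * V n j ω} = ∅ := by
          intro n
          refine Set.eq_empty_of_forall_notMem fun ω h => ?_
          simp only [Finset.sum_empty, Set.mem_setOf_eq] at h
          exact absurd h (not_lt.2 (zero_le))
        simp only [this, measure_empty]
        exact tendsto_const_nhds
    | insert b s hjs ih =>
        intro ε' hε'
        have hhalf : (0 : ℝ≥0∞) < ε' / 2 := ENNReal.div_pos hε'.ne' ofNat_ne_top
        -- convergence of the single term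
        have hsingle : Tendsto (fun n => μ {ω | ε' / 2 < (c b : ℝ≥0∞) * V n b ω})
            atTop (𝓝 0) := by
          by_cases hb : c b = 0
          · have : ∀ n, {ω | ε' / 2 < (c b : ℝ≥0∞) * V n b ω} = ∅ := by
              intro n
              refine Set.eq_empty_of_forall_notMem fun ω h => ?_
              simp only [Set.mem_setOf_eq, hb, ENNReal.coe_zero, zero_mul] at h
              exact absurd h (not_lt.2 (zero_le))
            simp only [this, measure_empty]
            exact tendsto_const_nhds
          · have hpos : (0 : ℝ≥0∞) < ε' / 2 / (c b : ℝ≥0∞) :=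
              ENNReal.div_pos hhalf.ne' ENNReal.coe_ne_top
            have hsub : ∀ n, {ω | ε' / 2 < (c b : ℝ≥0∞) * V n b ω}
                ⊆ {ω | ε' / 2 / (c b : ℝ≥0∞) < V n b ω} := by
              intro n ω hω
              simp only [Set.mem_setOf_eq] at hω ⊢
              by_contra hcon
              push_neg at hcon
              have : (c b : ℝ≥0∞) * V n b ω ≤ ε' / 2 :=
                le_trans (mul_le_mul_right hcon _) ENNReal.mul_div_le
              exact absurd hω (not_lt.2 this)
            refine tendsto_of_tendsto_of_tendsto_of_le_of_le tendsto_const_nhds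
              (hdiff b e _ hpos) (fun n => zero_le) (fun n => measure_mono (hsub n))
        -- combine with the inductive hypothesis
        have hsum := ih (ε' / 2) hhalf
        have hsub : ∀ n, {ω | ε' < ∑ j ∈ insert b s, (c j : ℝ≥0∞) * V n j ω}
            ⊆ {ω | ε' / 2 < (c b : ℝ≥0∞) * V n b ω}
              ∪ {ω | ε' / 2 < ∑ j ∈ s, (c j : ℝ≥0∞) * V n j ω} := by
          intro n ω hω
          simp only [Set.mem_setOf_eq, Finset.sum_insert hjs] at hω
          by_contra hcon
          simp only [Set.mem_union, Set.mem_setOf_eq, not_or, not_lt] at hcon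
          have : (c b : ℝ≥0∞) * V n b ω + ∑ j ∈ s, (c j : ℝ≥0∞) * V n j ω
              ≤ ε' / 2 + ε' / 2 := add_le_add hcon.1 hcon.2
          rw [ENNReal.add_halves] at this
          exact absurd hω (not_lt.2 this)
        have hup : Tendsto (fun n => μ {ω | ε' / 2 < (c b : ℝ≥0∞) * V n b ω}
            + μ {ω | ε' / 2 < ∑ j ∈ s, (c j : ℝ≥0∞) * V n j ω}) atTop (𝓝 0) := by
          simpa using hsingle.add hsum
        refine tendsto_of_tendsto_of_tendsto_of_le_of_le tendsto_const_nhds hup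
          (fun n => zero_le) (fun n => le_trans (measure_mono (hsub n)) (measure_union_le _ _))
  -- main argument
  intro ε hε
  rcases eq_top_or_lt_top ε with rfl | hεlt
  · have : ∀ n, {ω : Ω | (⊤ : ℝ≥0∞) < ⨆ t, (‖ψ n ω t - A * U n e ω t‖₊ : ℝ≥0∞)} = ∅ :=
      fun n => Set.eq_empty_of_forall_notMem fun ω h => not_top_lt (show (⊤ : ℝ≥0∞) < _ from h)
    simp only [this, measure_empty]
    exact tendsto_const_nhds
  have hεtop : ε ≠ ⊤ := hεlt.ne
  rw [ENNReal.tendsto_nhds_zero]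
  intro η hη
  rcases eq_or_ne η ⊤ with rfl | hηtop
  · exact Eventually.of_forall fun n => le_top
  have hη2 : (0 : ℝ≥0∞) < η / 2 := ENNReal.div_pos hη.ne' ofNat_ne_top
  have hε2 : (0 : ℝ≥0∞) < ε / 2 := ENNReal.div_pos hε.ne' ofNat_ne_top
  have hε2top : ε / 2 ≠ ⊤ := by
    exact (ENNReal.div_lt_top hεtop (by norm_num)).ne
  set D : ℝ≥0∞ := 2 * (C + 1) with hD_def
  have hD0 : D ≠ 0 := by
    simp [hD_def]
  have hDtop : D ≠ ⊤ := by
    simp [hD_def, ENNReal.mul_ne_top, ENNReal.add_ne_top, hCtop.ne]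
  set δ : ℝ≥0∞ := η / 2 * (ε / 2) / D with hδ_def
  have hδ0 : 0 < δ := by
    refine ENNReal.div_pos ?_ hDtop
    exact (ENNReal.mul_pos hη2.ne' hε2.ne').ne'
  -- choose the finite set
  have hctop : (∑' j, (c j : ℝ≥0∞)) ≠ ⊤ := ENNReal.tsum_coe_ne_top_iff_summable.2 hc
  have htail := ENNReal.tendsto_tsum_compl_atTop_zero hctop
  obtain ⟨F, hF⟩ : ∃ F : Finset I, (∑' j : {x // x ∉ F}, (c j : ℝ≥0∞)) < δ :=
    ((tendsto_order.1 htail).2 δ hδ0).exists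
  -- tail estimate
  have htailmeas : ∀ n, Measurable fun ω => ∑' j : {x // x ∉ F}, (c (j : I) : ℝ≥0∞) * V n j ω :=
    fun n => Measurable.ennreal_tsum fun j => (hVmeas n j).const_mul _
  have htailint : ∀ n, (∫⁻ ω, ∑' j : {x // x ∉ F}, (c (j : I) : ℝ≥0∞) * V n j ω ∂μ)
      ≤ η / 2 * (ε / 2) := by
    intro n
    have h1 : (∫⁻ ω, ∑' j : {x // x ∉ F}, (c (j : I) : ℝ≥0∞) * V n j ω ∂μ)
        = ∑' j : {x // x ∉ F}, (c (j : I) : ℝ≥0∞) * ∫⁻ ω, V n j ω ∂μ := by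
      rw [lintegral_tsum fun j : {x // x ∉ F} => ((hVmeas n (j : I)).const_mul ((c (j : I) : ℝ≥0∞))).aemeasurable]
      exact tsum_congr fun j => lintegral_const_mul _ (hVmeas n j)
    rw [h1]
    calc ∑' j : {x // x ∉ F}, (c (j : I) : ℝ≥0∞) * ∫⁻ ω, V n j ω ∂μ
        ≤ ∑' j : {x // x ∉ F}, (c (j : I) : ℝ≥0∞) * D :=
          ENNReal.tsum_le_tsum fun j => mul_le_mul_right (hVint n j) _
      _ = (∑' j : {x // x ∉ F}, (c (j : I) : ℝ≥0∞)) * D := ENNReal.tsum_mul_right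
      _ ≤ δ * D := mul_le_mul_left hF.le _
      _ = η / 2 * (ε / 2) := ENNReal.div_mul_cancel hD0 hDtop
  have htailmeasure : ∀ n,
      μ {ω | ε / 2 < ∑' j : {x // x ∉ F}, (c (j : I) : ℝ≥0∞) * V n j ω} ≤ η / 2 := by
    intro n
    calc μ {ω | ε / 2 < ∑' j : {x // x ∉ F}, (c (j : I) : ℝ≥0∞) * V n j ω}
        ≤ μ {ω | ε / 2 ≤ ∑' j : {x // x ∉ F}, (c (j : I) : ℝ≥0∞) * V n j ω} :=
          measure_mono fun ω hω => (le_of_lt hω : ε / 2 ≤ _)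
      _ ≤ (∫⁻ ω, ∑' j : {x // x ∉ F}, (c (j : I) : ℝ≥0∞) * V n j ω ∂μ) / (ε / 2) :=
          meas_ge_le_lintegral_div (htailmeas n).aemeasurable hε2.ne' hε2top
      _ ≤ (η / 2 * (ε / 2)) / (ε / 2) :=
          ENNReal.div_le_div_right (htailint n) _
      _ = η / 2 := by
          rw [mul_div_assoc, ENNReal.div_self hε2.ne' hε2top, mul_one]
  -- finite part eventually small
  have hWsmall : ∀ᶠ n in atTop,
      μ {ω | ε / 2 < ∑ j ∈ F, (c j : ℝ≥0∞) * V n j ω} ≤ η / 2 :=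
    (ENNReal.tendsto_nhds_zero.1 (hfin F (ε / 2) hε2)) (η / 2) hη2
  filter_upwards [hWsmall] with n hW
  -- split the tsum
  have hsplit : ∀ ω, (∑' j, (c j : ℝ≥0∞) * V n j ω)
      = (∑ j ∈ F, (c j : ℝ≥0∞) * V n j ω)
        + ∑' j : {x // x ∉ F}, (c (j : I) : ℝ≥0∞) * V n j ω := by
    intro ω
    rw [← Summable.tsum_add_tsum_compl (s := (↑F : Set I)) (f := fun j => (c j : ℝ≥0∞) * V n j ω)
      ENNReal.summable ENNReal.summable]
    exact congrArg₂ (· + ·) (Finset.tsum_subtype' F fun j => (c j : ℝ≥0∞) * V n j ω) rfl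
  have hsub : {ω : Ω | ε < ∑' j, (c j : ℝ≥0∞) * V n j ω}
      ⊆ {ω | ε / 2 < ∑ j ∈ F, (c j : ℝ≥0∞) * V n j ω}
        ∪ {ω | ε / 2 < ∑' j : {x // x ∉ F}, (c (j : I) : ℝ≥0∞) * V n j ω} := by
    intro ω hω
    simp only [Set.mem_setOf_eq, hsplit ω] at hω
    by_contra hcon
    simp only [Set.mem_union, Set.mem_setOf_eq, not_or, not_lt] at hcon
    have := add_le_add hcon.1 hcon.2
    rw [ENNReal.add_halves] at this
    exact absurd hω (not_lt.2 this)
  calc μ {ω : Ω | ε < ⨆ t, (‖ψ n ω t - A * U n e ω t‖₊ : ℝ≥0∞)}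
      ≤ μ {ω : Ω | ε < ∑' j, (c j : ℝ≥0∞) * V n j ω} := by
        refine measure_mono_ae ?_
        filter_upwards [hae n] with ω hω hmem
        exact lt_of_lt_of_le hmem hω
    _ ≤ μ ({ω | ε / 2 < ∑ j ∈ F, (c j : ℝ≥0∞) * V n j ω}
        ∪ {ω | ε / 2 < ∑' j : {x // x ∉ F}, (c (j : I) : ℝ≥0∞) * V n j ω}) :=
        measure_mono hsub
    _ ≤ _ := measure_union_le _ _
    _ ≤ η / 2 + η / 2 := add_le_add hW (htailmeasure n)
    _ = η := ENNReal.add_halves η
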